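/- Let R be a commutative ring and n ≥ 2 an integer. Suppose f ∈ R[x,y] is a homogeneous polynomial of degree n satisfying f(x,y) = f(y,x) and the 2-cocycle condition f(y,z) − f(x+y,z) + f(x,y+z) − f(x,y) = 0 in R[x,y,z]. Then there is a unique element a ∈ R with f(x,y) = a·C_n(x,y). (Lazard's symmetric 2-cocycle lemma.) -/

import Mathlib

noncomputable section

open MvPolynomial

/-- `d_n`: the prime `ℓ` if `n = ℓ^k` is a (positive) power of a prime, and `1`
otherwise. -/
def dn (n : ℕ) : ℕ := if IsPrimePow n then n.minFac else 1

/-- The `n`-th symmetric 2-cocycle `C_n(x,y) = d_n⁻¹((x+y)^n − x^n − y^n)`, a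
homogeneous polynomial of degree `n` with integer coefficients, written out via
the binomial theorem: `C_n(x,y) = Σ_{0 < k < n} (C(n,k)/d_n) x^k y^{n-k}`. -/
def Cpoly (n : ℕ) : MvPolynomial (Fin 2) ℤ :=
  ∑ k ∈ Finset.Ioo 0 n,
    monomial (Finsupp.single 0 k + Finsupp.single 1 (n - k))
      ((n.choose k : ℤ) / (dn n : ℤ))

open Finset

section Aux

lemma lucas_step {p : ℕ} (hp : p.Prime) (N k : ℕ) :
    N.choose k ≡ (N % p).choose (k % p) * (N / p).choose (k / p) [MOD p] := by
  haveI : Fact p.Prime := ⟨hp⟩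
  exact Choose.choose_modEq_choose_mod_mul_choose_div_nat

lemma dvd_of_modEq {p a b : ℕ} (h : a ≡ b [MOD p]) (ha : p ∣ a) : p ∣ b :=
  (Nat.modEq_zero_iff_dvd).1 ((h.symm.trans (Nat.modEq_zero_iff_dvd.2 ha)))

lemma key_not_dvd {q : ℕ} (hq : q.Prime) :
    ∀ b A B, q ^ b ∣ A → B < q ^ b → ¬ q ∣ (A + B).choose B := by
  intro b
  induction b with
  | zero =>
    intro A B _ hB
    have hB0 : B = 0 := by simpa using hB
    subst hB0
    rw [Nat.choose_zero_right]
    intro h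
    exact hq.ne_one (Nat.eq_one_of_dvd_one h)
  | succ b ih =>
    intro A B hA hB hdvd
    have hqpos : 0 < q := hq.pos
    have hqA : q ∣ A := dvd_trans (dvd_pow_self q (Nat.succ_ne_zero b)) hA
    obtain ⟨A', rfl⟩ := hqA
    have hmod : (q * A' + B) % q = B % q := by
      simp [Nat.add_mod, Nat.mul_mod_right]
    have hdivq : (q * A' + B) / q = A' + B / q := by
      rw [Nat.add_comm, Nat.add_mul_div_left _ _ hqpos, Nat.add_comm]
    have hstep := lucas_step hq (q * A' + B) B
    rw [hmod, hdivq, Nat.choose_self, one_mul] at hstep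
    have h2 : q ∣ (A' + B / q).choose (B / q) := dvd_of_modEq hstep hdvd
    have hA' : q ^ b ∣ A' := by
      obtain ⟨t, ht⟩ := hA
      refine ⟨t, Nat.eq_of_mul_eq_mul_left hqpos ?_⟩
      rw [ht]; ring
    have hB' : B / q < q ^ b := by
      rw [Nat.div_lt_iff_lt_mul hqpos, ← pow_succ]
      exact hB
    exact ih A' (B / q) hA' hB' h2

lemma row1 {q : ℕ} (hq : q.Prime) :
    ∀ m, 2 ≤ m → (∀ j, 0 < j → j < m → q ∣ m.choose j) → ∃ b, 0 < b ∧ m = q ^ b := by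
  intro m
  induction m using Nat.strong_induction_on with
  | _ m ih =>
    intro hm hrow
    have hqm : q ∣ m := by
      have := hrow 1 one_pos (by omega)
      simpa using this
    obtain ⟨m₂, rfl⟩ := hqm
    have hq2 : 2 ≤ q := hq.two_le
    have hm₂ : 1 ≤ m₂ := by
      rcases Nat.eq_zero_or_pos m₂ with h | h
      · subst h; simp at hm
      · exact h
    rcases eq_or_lt_of_le hm₂ with h1 | h2
    · exact ⟨1, one_pos, by rw [pow_one, ← h1, mul_one]⟩
    · have hrec : ∀ j, 0 < j → j < m₂ → q ∣ m₂.choose j := by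
        intro j hj hjm
        have h0 : q ∣ (q * m₂).choose (q * j) :=
          hrow (q * j) (by positivity) (mul_lt_mul_of_pos_left hjm hq.pos)
        have hstep := lucas_step hq (q * m₂) (q * j)
        rw [Nat.mul_mod_right, Nat.mul_mod_right, Nat.mul_div_cancel_left _ hq.pos,
          Nat.mul_div_cancel_left _ hq.pos, Nat.choose_self, one_mul] at hstep
        exact dvd_of_modEq hstep h0
      obtain ⟨b, hb, rfl⟩ := ih m₂ (by nlinarith) (by omega) hrec
      exact ⟨b + 1, by omega, by ring⟩

lemma row2 {q : ℕ} (hq : q.Prime) :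
    ∀ b N, 1 ≤ N → (∀ j, 0 < j → j < q ^ b → q ∣ N.choose j) → q ^ b ∣ N := by
  intro b
  induction b with
  | zero => simp
  | succ b ih =>
    intro N hN hrow
    have hq2 : 2 ≤ q := hq.two_le
    have h1q : (1:ℕ) < q ^ (b+1) := by
      calc (1:ℕ) < q := by omega
      _ ≤ q ^ (b+1) := Nat.le_self_pow (by omega) q
    have hqN : q ∣ N := by
      have := hrow 1 one_pos h1q
      simpa using this
    obtain ⟨N₂, rfl⟩ := hqN
    have hN₂ : 1 ≤ N₂ := by
      rcases Nat.eq_zero_or_pos N₂ with h | h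
      · subst h; simp at hN
      · exact h
    have hrec : ∀ j, 0 < j → j < q ^ b → q ∣ N₂.choose j := by
      intro j hj hjb
      have h0 : q ∣ (q * N₂).choose (q * j) := by
        refine hrow (q * j) (by positivity) ?_
        rw [_root_.pow_succ']
        exact mul_lt_mul_of_pos_left hjb hq.pos
      have hstep := lucas_step hq (q * N₂) (q * j)
      rw [Nat.mul_mod_right, Nat.mul_mod_right, Nat.mul_div_cancel_left _ hq.pos,
        Nat.mul_div_cancel_left _ hq.pos, Nat.choose_self, one_mul] at hstep
      exact dvd_of_modEq hstep h0
    rw [_root_.pow_succ']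
    exact mul_dvd_mul_left q (ih N₂ hN₂ hrec)

lemma bezout_finset {ι : Type*} [DecidableEq ι] (s : Finset ι) (f : ι → ℕ) :
    ∃ μ : ι → ℤ, ∑ x ∈ s, μ x * f x = s.gcd f := by
  induction s using Finset.induction_on with
  | empty => exact ⟨0, by simp⟩
  | @insert a s ha ih =>
    obtain ⟨μ, hμ⟩ := ih
    refine ⟨fun x => if x = a then Nat.gcdA (f a) (s.gcd f) else Nat.gcdB (f a) (s.gcd f) * μ x, ?_⟩
    rw [Finset.sum_insert ha, Finset.gcd_insert]
    have h1 : ∑ x ∈ s, (if x = a then Nat.gcdA (f a) (s.gcd f) else Nat.gcdB (f a) (s.gcd f) * μ x) * f x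
        = Nat.gcdB (f a) (s.gcd f) * ∑ x ∈ s, μ x * f x := by
      rw [Finset.mul_sum]
      refine Finset.sum_congr rfl fun x hx => ?_
      rw [if_neg (by rintro rfl; exact ha hx), mul_assoc]
    rw [h1, hμ]
    simp only [if_pos rfl]
    have hg : (GCDMonoid.gcd (f a) (s.gcd f) : ℕ) = Nat.gcd (f a) (s.gcd f) := rfl
    rw [hg, Nat.gcd_eq_gcd_ab]
    push_cast
    ring

noncomputable def gam (n j : ℕ) : ℕ := n.choose j / dn n

lemma dn_pos (n : ℕ) : 0 < dn n := by
  unfold dn; split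
  · exact Nat.minFac_pos n
  · exact one_pos

lemma dn_dvd (n : ℕ) : dn n ∣ n := by
  unfold dn; split
  · exact Nat.minFac_dvd n
  · exact one_dvd n

lemma dn_of_prime_pow {p t : ℕ} (hp : p.Prime) (ht : 0 < t) : dn (p ^ t) = p := by
  unfold dn
  rw [if_pos ⟨p, t, hp.prime, ht, rfl⟩]
  exact Nat.Prime.pow_minFac hp (by omega)

lemma choose_pp_not_sq {p t : ℕ} (hp : p.Prime) (ht : 1 ≤ t) :
    ¬ p ^ 2 ∣ (p ^ t).choose (p ^ (t - 1)) := by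
  intro ⟨e, he⟩
  have hp1 : 2 ≤ p := hp.two_le
  have h2 : p ^ (t - 1) * p = p ^ t := by
    rw [← _root_.pow_succ]; congr 1; omega
  have hpow1 : 1 ≤ p ^ (t - 1) := Nat.one_le_pow _ _ hp.pos
  have hle : p ^ (t - 1) ≤ p ^ t := Nat.pow_le_pow_right hp.pos (by omega)
  have h1t : 1 ≤ p ^ t := Nat.one_le_pow _ _ hp.pos
  -- the key non-divisibility
  have hkey : ¬ p ∣ (p ^ t - 1).choose (p ^ (t - 1) - 1) := by
    have h3 : p ^ (t - 1) * (p - 1) = p ^ t - p ^ (t - 1) := by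
      rw [Nat.mul_sub, mul_one, h2]
    have := key_not_dvd hp (t - 1) (p ^ t - p ^ (t - 1)) (p ^ (t - 1) - 1)
      ⟨p - 1, h3.symm⟩ (by omega)
    have harith : p ^ t - p ^ (t - 1) + (p ^ (t - 1) - 1) = p ^ t - 1 := by omega
    rwa [harith] at this
  -- the identity
  have hid : Nat.succ (p ^ t - 1) * (p ^ t - 1).choose (p ^ (t - 1) - 1) =
      (Nat.succ (p ^ t - 1)).choose (Nat.succ (p ^ (t - 1) - 1)) * Nat.succ (p ^ (t - 1) - 1) :=
    Nat.add_one_mul_choose_eq (p ^ t - 1) (p ^ (t - 1) - 1)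
  have hs1 : Nat.succ (p ^ t - 1) = p ^ t := by omega
  have hs2 : Nat.succ (p ^ (t - 1) - 1) = p ^ (t - 1) := by omega
  rw [hs1, hs2] at hid
  -- p^t * X = choose * p^(t-1), choose = p^2 * e
  rw [he] at hid
  have hcan : p * (p ^ t - 1).choose (p ^ (t - 1) - 1) = p * (p * e) := by
    apply Nat.eq_of_mul_eq_mul_left (show 0 < p ^ (t-1) by omega)
    calc p ^ (t-1) * (p * (p ^ t - 1).choose (p ^ (t - 1) - 1))
        = p ^ t * (p ^ t - 1).choose (p ^ (t - 1) - 1) := by rw [← h2]; ring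
      _ = p ^ 2 * e * p ^ (t-1) := hid
      _ = p ^ (t-1) * (p * (p * e)) := by ring
  have : (p ^ t - 1).choose (p ^ (t - 1) - 1) = p * e :=
    Nat.eq_of_mul_eq_mul_left hp.pos hcan
  exact hkey ⟨e, this⟩

lemma gam_mul (n j : ℕ) (h0 : 0 < j) (hj : j < n) : dn n * gam n j = n.choose j := by
  apply Nat.mul_div_cancel'
  unfold dn; split
  · rename_i h
    obtain ⟨p, t, hp, ht, rfl⟩ := h
    rw [Nat.Prime.pow_minFac (Nat.prime_iff.mpr hp) (by omega)]
    exact Nat.Prime.dvd_choose_pow (Nat.prime_iff.mpr hp) (by omega) (by omega)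
  · exact one_dvd _

lemma gam_symm {n m : ℕ} (h : m ≤ n) : gam n (n - m) = gam n m := by
  unfold gam; rw [Nat.choose_symm h]

lemma gammaA {n i m : ℕ} (hn : 2 ≤ n) (hi : 1 ≤ i) (him : i < m) (hm : m ≤ n - 1) :
    m.choose i * gam n m = (n - i).choose (m - i) * gam n i := by
  apply Nat.eq_of_mul_eq_mul_left (dn_pos n)
  calc dn n * (m.choose i * gam n m) = m.choose i * (dn n * gam n m) := by ring
    _ = m.choose i * n.choose m := by rw [gam_mul n m (by omega) (by omega)]
    _ = n.choose m * m.choose i := by ring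
    _ = n.choose i * (n - i).choose (m - i) := Nat.choose_mul (by omega)
    _ = (n - i).choose (m - i) * (dn n * gam n i) := by
          rw [gam_mul n i (by omega) (by omega)]; ring
    _ = dn n * ((n - i).choose (m - i) * gam n i) := by ring

lemma gam_dvd_choose (n j : ℕ) (h0 : 0 < j) (hj : j < n) : gam n j ∣ n.choose j :=
  Dvd.intro_left _ (gam_mul n j h0 hj)

lemma gam_gcd_one {n : ℕ} (hn : 2 ≤ n) : (Finset.Ioo 0 n).gcd (gam n) = 1 := by
  by_contra hg
  set g := (Finset.Ioo 0 n).gcd (gam n) with hgdef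
  have hdvd : ∀ j, 0 < j → j < n → g ∣ gam n j := fun j h1 h2 =>
    Finset.gcd_dvd (Finset.mem_Ioo.mpr ⟨h1, h2⟩)
  have hq : (Nat.minFac g).Prime := Nat.minFac_prime hg
  set q := Nat.minFac g with hqdef
  have hqdvd : ∀ j, 0 < j → j < n → q ∣ gam n j := fun j h1 h2 =>
    dvd_trans (Nat.minFac_dvd g) (hdvd j h1 h2)
  have hqchoose : ∀ j, 0 < j → j < n → q ∣ n.choose j := fun j h1 h2 =>
    dvd_trans (hqdvd j h1 h2) (gam_dvd_choose n j h1 h2)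
  by_cases hpp : IsPrimePow n
  · obtain ⟨p, t, hp0, ht, rfl⟩ := hpp
    have hp : p.Prime := Nat.prime_iff.mpr hp0
    have hd : dn (p ^ t) = p := dn_of_prime_pow hp ht
    by_cases hqp : q = p
    · rw [hqp] at hqdvd
      have hj1 : 0 < p ^ (t - 1) := Nat.pow_pos hp.pos
      have hj2 : p ^ (t - 1) < p ^ t := Nat.pow_lt_pow_right hp.one_lt (by omega)
      obtain ⟨e, he⟩ := hqdvd _ hj1 hj2
      refine choose_pp_not_sq hp ht ⟨e, ?_⟩
      rw [← gam_mul (p ^ t) (p ^ (t-1)) hj1 hj2, hd, he]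
      ring
    · have hrow := row1 hq (p ^ t) (by
        have : 2 ≤ p := hp.two_le
        calc 2 ≤ p := this
          _ ≤ p ^ t := Nat.le_self_pow (by omega) p) (hqchoose)
      obtain ⟨b, hb, hqb⟩ := hrow
      have : q ∣ p ^ t := by rw [hqb]; exact dvd_pow_self q (by omega)
      exact hqp ((Nat.prime_dvd_prime_iff_eq hq hp).1 (hq.dvd_of_dvd_pow this))
  · obtain ⟨b, hb, hnb⟩ := row1 hq n hn hqchoose
    exact hpp ⟨q, b, hq.prime, hb, hnb.symm⟩

lemma bezout_gam {n : ℕ} (hn : 2 ≤ n) :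
    ∃ μ : ℕ → ℤ, ∑ j ∈ Finset.Ioo 0 n, μ j * gam n j = 1 := by
  obtain ⟨μ, hμ⟩ := bezout_finset (Finset.Ioo 0 n) (gam n)
  exact ⟨μ, by rw [hμ, gam_gcd_one hn]; norm_num⟩

lemma ann_of_bezout {R : Type*} [CommRing R] (s : Finset ℕ) (F : ℕ → ℕ) (x : R)
    (h : ∀ j ∈ s, (F j : R) * x = 0) : ((s.gcd F : ℕ) : R) * x = 0 := by
  obtain ⟨μ, hμ⟩ := bezout_finset s F
  have hc := congrArg (fun z : ℤ => (z : R) * x) hμ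
  push_cast at hc
  rw [← hc, Finset.sum_mul]
  refine Finset.sum_eq_zero fun j hj => ?_
  rw [mul_assoc, h j hj, mul_zero]

lemma ann_gcd2 {R : Type*} [CommRing R] (a b : ℕ) (x : R)
    (ha : (a : R) * x = 0) (hb : (b : R) * x = 0) :
    ((Nat.gcd a b : ℕ) : R) * x = 0 := by
  have hc := congrArg (fun z : ℤ => (z : R) * x) (Nat.gcd_eq_gcd_ab a b)
  push_cast at hc
  rw [hc]
  linear_combination ((Nat.gcdA a b : ℤ) : R) * ha + ((Nat.gcdB a b : ℤ) : R) * hb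

theorem partB {R : Type*} [CommRing R] {n : ℕ} (hn : 2 ≤ n) (c : ℕ → R)
    (hsym : ∀ m, m ≤ n → c (n - m) = c m)
    (hA : ∀ i m, 1 ≤ i → i < m → m ≤ n - 1 →
      (m.choose i : R) * c m = ((n - i).choose (m - i) : R) * c i) :
    ∀ i m, 1 ≤ i → i ≤ n - 1 → 1 ≤ m → m ≤ n - 1 →
      (gam n i : R) * c m = (gam n m : R) * c i := by
  set D : ℕ → ℕ → R := fun i m => (gam n i : R) * c m - (gam n m : R) * c i with hD
  suffices hS : ∀ i m, 1 ≤ i → i ≤ n - 1 → 1 ≤ m → m ≤ n - 1 → D i m = 0 by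
    intro i m h1 h2 h3 h4
    have h0 := hS i m h1 h2 h3 h4
    simp only [hD] at h0
    linear_combination h0
  have hDanti : ∀ i m, D i m = - D m i := by intro i m; simp only [hD]; ring
  have hDflip : ∀ i m, m ≤ n → D i (n - m) = D i m := by
    intro i m hm
    simp only [hD, gam_symm hm, hsym m hm]
  have hDtrans : ∀ k j M, 1 ≤ j → j < M → M ≤ n - 1 →
      (M.choose j : R) * D k M = ((n - j).choose (M - j) : R) * D k j := by
    intro k j M h1 h2 h3
    have hg : ((M.choose j : ℕ) : R) * ((gam n M : ℕ) : R)
        = (((n - j).choose (M - j) : ℕ) : R) * ((gam n j : ℕ) : R) := by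
      exact_mod_cast congrArg (fun z : ℕ => (z : R)) (gammaA hn h1 h2 h3)
    have hAx := hA j M h1 h2 h3
    simp only [hD]
    linear_combination ((gam n k : ℕ) : R) * hAx - c k * hg
  have hQ : ∀ m, ∀ i, 1 ≤ i → i < m → 2 * m ≤ n → D i m = 0 := by
    intro m
    induction m using Nat.strong_induction_on with
    | _ m ih =>
      intro i hi him h2m
      have hm2 : 2 ≤ m := by omega
      have hmn1 : m ≤ n - 1 := by omega
      have hz : ∀ a b, 1 ≤ a → a < m → 1 ≤ b → b < m → D a b = 0 := by
        intro a b ha1 ha2 hb1 hb2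
        rcases lt_trichotomy a b with h | h | h
        · exact ih b hb2 a ha1 h (by omega)
        · subst h; simp only [hD]; ring
        · rw [hDanti, ih a ha2 b hb1 h (by omega)]; ring
      have ann1 : ∀ j, 1 ≤ j → j < m → (m.choose j : R) * D i m = 0 := by
        intro j h1 h2
        rw [hDtrans i j m h1 h2 hmn1, hz i j hi him h1 h2, mul_zero]
      have ann2 : ∀ j, 1 ≤ j → j < m → ((n - m).choose j : R) * D i m = 0 := by
        intro j h1 h2
        have hflip : D i (n - m) = D i m := hDflip i m (by omega)
        rw [← hflip, hDtrans i j (n - m) h1 (by omega) (by omega),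
          hz i j hi him h1 h2, mul_zero]
      have ann3 : ((n - i).choose (m - i) : R) * D i m = 0 := by
        have h1 : D (n - m) (n - i) = - D i m := by
          calc D (n - m) (n - i) = D (n - m) i := hDflip (n - m) i (by omega)
            _ = - D i (n - m) := hDanti _ _
            _ = - D i m := by rw [hDflip i m (by omega)]
        have h2 := hDtrans (n - m) (n - m) (n - i) (by omega) (by omega) (by omega)
        have h3 : D (n - m) (n - m) = 0 := by simp only [hD]; ring
        rw [h3, mul_zero, h1] at h2
        have h4 : (n - i).choose (n - m) = (n - i).choose (m - i) := by
          rw [← Nat.choose_symm (by omega : n - m ≤ n - i)]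
          congr 1
          omega
        rw [h4] at h2
        have h5 : ((n - i).choose (m - i) : R) * D i m
            = - (((n - i).choose (m - i) : R) * (- D i m)) := by ring
        rw [h5, h2, neg_zero]
      set g1 := (Finset.Ioo 0 m).gcd (m.choose) with hg1
      set g2 := (Finset.Ioo 0 m).gcd ((n - m).choose) with hg2
      set g3 := (n - i).choose (m - i) with hg3
      have hag1 : (g1 : R) * D i m = 0 := ann_of_bezout _ _ _ (fun j hj => by
        obtain ⟨hj1, hj2⟩ := Finset.mem_Ioo.mp hj; exact ann1 j hj1 hj2)
      have hag2 : (g2 : R) * D i m = 0 := ann_of_bezout _ _ _ (fun j hj => by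
        obtain ⟨hj1, hj2⟩ := Finset.mem_Ioo.mp hj; exact ann2 j hj1 hj2)
      have hag23 : ((Nat.gcd g2 g3 : ℕ) : R) * D i m = 0 := ann_gcd2 _ _ _ hag2 ann3
      have hag : ((Nat.gcd g1 (Nat.gcd g2 g3) : ℕ) : R) * D i m = 0 :=
        ann_gcd2 _ _ _ hag1 hag23
      have hgcd1 : Nat.gcd g1 (Nat.gcd g2 g3) = 1 := by
        by_contra hne
        have hq : (Nat.minFac (Nat.gcd g1 (Nat.gcd g2 g3))).Prime := Nat.minFac_prime hne
        set q := Nat.minFac (Nat.gcd g1 (Nat.gcd g2 g3)) with hqd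
        have hdq := Nat.minFac_dvd (Nat.gcd g1 (Nat.gcd g2 g3))
        have hq1 : q ∣ g1 := hdq.trans (Nat.gcd_dvd_left _ _)
        have hq2 : q ∣ g2 := hdq.trans ((Nat.gcd_dvd_right _ _).trans (Nat.gcd_dvd_left _ _))
        have hq3 : q ∣ g3 := hdq.trans ((Nat.gcd_dvd_right _ _).trans (Nat.gcd_dvd_right _ _))
        have hrow1 : ∀ j, 0 < j → j < m → q ∣ m.choose j := fun j a b =>
          hq1.trans (Finset.gcd_dvd (Finset.mem_Ioo.mpr ⟨a, b⟩))
        obtain ⟨b, hb0, hmb⟩ := row1 hq m hm2 hrow1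
        have hrow2 : ∀ j, 0 < j → j < q ^ b → q ∣ (n - m).choose j := fun j a hb' =>
          hq2.trans (Finset.gcd_dvd (Finset.mem_Ioo.mpr ⟨a, by omega⟩))
        have hdnm : q ^ b ∣ n - m := row2 hq b (n - m) (by omega) hrow2
        refine key_not_dvd hq b (n - m) (m - i) hdnm (by omega) ?_
        have harith : (n - m) + (m - i) = n - i := by omega
        rw [harith]
        exact hq3
      rw [hgcd1] at hag
      simpa using hag
  intro i m h1 h2 h3 h4
  have hi'1 : 1 ≤ min i (n - i) := by omega
  have hm'1 : 1 ≤ min m (n - m) := by omega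
  have e1 : D i m = D i (min m (n - m)) := by
    rcases le_total m (n - m) with h | h
    · rw [min_eq_left h]
    · rw [min_eq_right h]
      exact (hDflip i m (by omega)).symm
  have hDflipL : ∀ a b, a ≤ n → D (n - a) b = D a b := by
    intro a b ha
    rw [hDanti (n - a) b, hDflip b a ha, ← hDanti a b]
  have e2 : D i (min m (n - m)) = D (min i (n - i)) (min m (n - m)) := by
    rcases le_total i (n - i) with h | h
    · rw [min_eq_left h]
    · rw [min_eq_right h, hDflipL i (min m (n - m)) (by omega)]
  rw [e1, e2]
  rcases lt_trichotomy (min i (n - i)) (min m (n - m)) with h | h | h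
  · exact hQ _ _ hi'1 h (by omega)
  · rw [h]; simp only [hD]; ring
  · rw [hDanti, hQ _ _ hm'1 h (by omega)]; ring

-- exponent vectors
def e2 (a b : ℕ) : Fin 2 →₀ ℕ := Finsupp.single 0 a + Finsupp.single 1 b
def e3 (a b c : ℕ) : Fin 3 →₀ ℕ :=
  Finsupp.single 0 a + Finsupp.single 1 b + Finsupp.single 2 c

@[simp] lemma e2_apply0 (a b : ℕ) : e2 a b 0 = a := by
  simp [e2, Finsupp.single_apply]
@[simp] lemma e2_apply1 (a b : ℕ) : e2 a b 1 = b := by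
  simp [e2, Finsupp.single_apply]
@[simp] lemma e3_apply0 (a b c : ℕ) : e3 a b c 0 = a := by
  simp [e3, Finsupp.single_apply]
@[simp] lemma e3_apply1 (a b c : ℕ) : e3 a b c 1 = b := by
  simp [e3, Finsupp.single_apply]
@[simp] lemma e3_apply2 (a b c : ℕ) : e3 a b c 2 = c := by
  simp [e3, Finsupp.single_apply]

lemma e2_inj {a b a' b' : ℕ} : e2 a b = e2 a' b' ↔ a = a' ∧ b = b' := by
  constructor
  · intro h
    exact ⟨by simpa using congrFun (congrArg (⇑) h) 0,
      by simpa using congrFun (congrArg (⇑) h) 1⟩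
  · rintro ⟨rfl, rfl⟩; rfl

lemma e3_inj {a b c a' b' c' : ℕ} : e3 a b c = e3 a' b' c' ↔ a = a' ∧ b = b' ∧ c = c' := by
  constructor
  · intro h
    exact ⟨by simpa using congrFun (congrArg (⇑) h) 0,
      by simpa using congrFun (congrArg (⇑) h) 1,
      by simpa using congrFun (congrArg (⇑) h) 2⟩
  · rintro ⟨rfl, rfl, rfl⟩; rfl

lemma e2_ext (μ : Fin 2 →₀ ℕ) : μ = e2 (μ 0) (μ 1) := by
  ext x
  fin_cases x <;> simp

lemma degree_e2 (μ : Fin 2 →₀ ℕ) : μ.degree = μ 0 + μ 1 := by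
  rw [Finsupp.degree_apply, Finset.sum_subset (Finset.subset_univ _)
    (fun x _ hx => Finsupp.notMem_support_iff.mp hx), Fin.sum_univ_two]

variable {R : Type*} [CommRing R]

lemma mono3 (a b c : ℕ) :
    (X 0 ^ a * X 1 ^ b * X 2 ^ c : MvPolynomial (Fin 3) R) = monomial (e3 a b c) 1 := by
  rw [X_pow_eq_monomial, X_pow_eq_monomial, X_pow_eq_monomial, monomial_mul, monomial_mul,
    one_mul, one_mul]
  rfl

lemma coeff3 (i j k a b c : ℕ) :
    coeff (e3 i j k) (X 0 ^ a * X 1 ^ b * X 2 ^ c : MvPolynomial (Fin 3) R)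
      = if a = i ∧ b = j ∧ c = k then 1 else 0 := by
  rw [mono3, coeff_monomial]
  congr 1
  simp only [eq_iff_iff]
  rw [e3_inj]

lemma cT1 (i j k m nm : ℕ) :
    coeff (e3 i j k) ((X 1 : MvPolynomial (Fin 3) R) ^ m * X 2 ^ nm)
      = if 0 = i ∧ m = j ∧ nm = k then 1 else 0 := by
  have h := coeff3 (R := R) i j k 0 m nm
  simpa using h

lemma cT4 (i j k m nm : ℕ) :
    coeff (e3 i j k) ((X 0 : MvPolynomial (Fin 3) R) ^ m * X 1 ^ nm)
      = if m = i ∧ nm = j ∧ 0 = k then 1 else 0 := by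
  have h := coeff3 (R := R) i j k m nm 0
  simpa using h

lemma cT2 (i j k m nm : ℕ) :
    coeff (e3 i j k) ((X 0 + X 1 : MvPolynomial (Fin 3) R) ^ m * X 2 ^ nm)
      = if i + j = m ∧ nm = k then (m.choose i : R) else 0 := by
  rw [add_pow, Finset.sum_mul, coeff_sum]
  have hterm : ∀ l ∈ range (m + 1),
      coeff (e3 i j k) ((X 0 : MvPolynomial (Fin 3) R) ^ l * X 1 ^ (m - l) * (m.choose l : MvPolynomial (Fin 3) R) * X 2 ^ nm)
        = if l = i ∧ m - l = j ∧ nm = k then (m.choose l : R) else 0 := by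
    intro l _
    have e : (X 0 : MvPolynomial (Fin 3) R) ^ l * X 1 ^ (m - l) * (m.choose l : MvPolynomial (Fin 3) R) * X 2 ^ nm
        = C ((m.choose l : R)) * (X 0 ^ l * X 1 ^ (m - l) * X 2 ^ nm) := by
      rw [C_eq_coe_nat]; ring
    rw [e, coeff_C_mul, coeff3, mul_ite, mul_one, mul_zero]
  rw [Finset.sum_congr rfl hterm]
  by_cases hc : i + j = m ∧ nm = k
  · obtain ⟨h1, h2⟩ := hc
    rw [Finset.sum_eq_single i]
    · rw [if_pos ⟨rfl, by omega, h2⟩, if_pos ⟨h1, h2⟩]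
    · intro l hl hne
      rw [if_neg]
      rintro ⟨rfl, -, -⟩
      exact hne rfl
    · intro hi
      exact absurd (Finset.mem_range.mpr (by omega)) hi
  · rw [if_neg hc]
    apply Finset.sum_eq_zero
    intro l hl
    rw [if_neg]
    rintro ⟨rfl, rfl, rfl⟩
    exact hc ⟨by rw [Finset.mem_range] at hl; omega, rfl⟩

lemma cT3 (i j k m nm : ℕ) :
    coeff (e3 i j k) ((X 0 : MvPolynomial (Fin 3) R) ^ m * (X 1 + X 2) ^ nm)
      = if m = i ∧ j + k = nm then (nm.choose j : R) else 0 := by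
  rw [add_pow, Finset.mul_sum, coeff_sum]
  have hterm : ∀ l ∈ range (nm + 1),
      coeff (e3 i j k) ((X 0 : MvPolynomial (Fin 3) R) ^ m * (X 1 ^ l * X 2 ^ (nm - l) * (nm.choose l : MvPolynomial (Fin 3) R)))
        = if m = i ∧ l = j ∧ nm - l = k then (nm.choose l : R) else 0 := by
    intro l _
    have e : (X 0 : MvPolynomial (Fin 3) R) ^ m * (X 1 ^ l * X 2 ^ (nm - l) * (nm.choose l : MvPolynomial (Fin 3) R))
        = C ((nm.choose l : R)) * (X 0 ^ m * X 1 ^ l * X 2 ^ (nm - l)) := by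
      rw [C_eq_coe_nat]; ring
    rw [e, coeff_C_mul, coeff3, mul_ite, mul_one, mul_zero]
  rw [Finset.sum_congr rfl hterm]
  by_cases hc : m = i ∧ j + k = nm
  · obtain ⟨h1, h2⟩ := hc
    rw [Finset.sum_eq_single j]
    · rw [if_pos ⟨h1, rfl, by omega⟩, if_pos ⟨h1, h2⟩]
    · intro l hl hne
      rw [if_neg]
      rintro ⟨-, rfl, -⟩
      exact hne rfl
    · intro hj
      exact absurd (Finset.mem_range.mpr (by omega)) hj
  · rw [if_neg hc]
    apply Finset.sum_eq_zero
    intro l hl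
    rw [if_neg]
    rintro ⟨rfl, rfl, rfl⟩
    exact hc ⟨rfl, by rw [Finset.mem_range] at hl; omega⟩

lemma decomp {n : ℕ} (f : MvPolynomial (Fin 2) R) (hhom : f.IsHomogeneous n) :
    f = ∑ m ∈ range (n + 1), monomial (e2 m (n - m)) (coeff (e2 m (n - m)) f) := by
  apply MvPolynomial.ext
  intro μ
  rw [coeff_sum]
  simp only [coeff_monomial]
  have hμ : μ = e2 (μ 0) (μ 1) := e2_ext μ
  by_cases hd : μ 0 + μ 1 = n
  · rw [Finset.sum_eq_single (μ 0)]
    · have h1 : n - μ 0 = μ 1 := by omega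
      rw [h1, ← hμ, if_pos rfl]
    · intro l _ hne
      rw [if_neg]
      intro h
      exact hne (e2_inj.mp (h.trans hμ)).1
    · intro h0
      exact absurd (Finset.mem_range.mpr (by omega)) h0
  · rw [hhom.coeff_eq_zero (by rw [degree_e2]; exact hd)]
    symm
    apply Finset.sum_eq_zero
    intro m hm
    rw [Finset.mem_range] at hm
    rw [if_neg]
    intro h
    obtain ⟨h1, h2⟩ := e2_inj.mp (h.trans hμ)
    omega


end Aux


/-- **Lazard's symmetric 2-cocycle lemma.** A homogeneous symmetric polynomial
2-cocycle of degree `n ≥ 2` over a commutative ring `R` is a unique `R`-multiple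
of `C_n`. -/
theorem symmetric_two_cocycle_lemma (R : Type*) [CommRing R] (n : ℕ) (hn : 2 ≤ n)
    (f : MvPolynomial (Fin 2) R)
    (hhom : f.IsHomogeneous n)
    (hsymm : rename (Equiv.swap (0 : Fin 2) 1) f = f)
    (hcocycle :
      aeval ![(X 1 : MvPolynomial (Fin 3) R), X 2] f -
        aeval ![X 0 + X 1, X 2] f +
        aeval ![X 0, X 1 + X 2] f -
        aeval ![X 0, X 1] f = 0) :
    ∃! a : R, f = C a * map (Int.castRingHom R) (Cpoly n) := by
  classical
  set c : ℕ → R := fun m => coeff (e2 m (n - m)) f with hc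
  -- coefficient symmetry
  have key : ∀ a b : ℕ, coeff (e2 a b) f = coeff (e2 b a) f := by
    intro a b
    have h := MvPolynomial.coeff_rename_mapDomain (Equiv.swap (0 : Fin 2) 1)
      (Equiv.injective _) f (e2 b a)
    have hmap : Finsupp.mapDomain (Equiv.swap (0 : Fin 2) 1) (e2 b a) = e2 a b := by
      rw [e2, e2, Finsupp.mapDomain_add, Finsupp.mapDomain_single, Finsupp.mapDomain_single,
        Equiv.swap_apply_left, Equiv.swap_apply_right, add_comm]
    rw [hmap, hsymm] at h
    exact h
  have hcsym : ∀ m, m ≤ n → c (n - m) = c m := by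
    intro m hm
    have h1 : n - (n - m) = m := by omega
    show coeff (e2 (n - m) (n - (n - m))) f = coeff (e2 m (n - m)) f
    rw [h1, key]
  -- decomposition
  have hf := decomp f hhom
  have hcf : ∀ m, coeff (e2 m (n - m)) f = c m := fun m => rfl
  simp only [hcf] at hf
  -- transform the cocycle identity
  rw [hf] at hcocycle
  have haev : ∀ (g : Fin 2 → MvPolynomial (Fin 3) R) (m : ℕ) (r : R),
      aeval g (monomial (e2 m (n - m)) r) = C r * (g 0 ^ m * g 1 ^ (n - m)) := by
    intro g m r
    rw [aeval_monomial, Finsupp.prod_fintype _ _ (fun i => pow_zero _), Fin.prod_univ_two]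
    simp [algebraMap_eq, mul_assoc]
  simp only [map_sum, haev, Matrix.cons_val_zero, Matrix.cons_val_one, Matrix.head_cons]
    at hcocycle
  -- extraction of relations
  have EA : ∀ i j k : ℕ, 1 ≤ i → 1 ≤ j → 1 ≤ k → i + j + k = n →
      (((i + j).choose i : R)) * c (i + j) = ((n - i).choose j : R) * c i := by
    intro i j k h1 h2 h3 h4
    have h := congrArg (coeff (e3 i j k)) hcocycle
    simp only [coeff_sub, coeff_add, coeff_sum, coeff_C_mul, coeff_zero,
      cT1, cT2, cT3, cT4] at h
    have S1 : ∑ m ∈ range (n + 1), c m * (if 0 = i ∧ m = j ∧ n - m = k then (1:R) else 0) = 0 :=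
      Finset.sum_eq_zero fun m _ => by rw [if_neg (by omega), mul_zero]
    have S4 : ∑ m ∈ range (n + 1), c m * (if m = i ∧ n - m = j ∧ 0 = k then (1:R) else 0) = 0 :=
      Finset.sum_eq_zero fun m hm => by
        rw [Finset.mem_range] at hm
        rw [if_neg (by omega), mul_zero]
    have S2 : ∑ m ∈ range (n + 1), c m * (if i + j = m ∧ n - m = k then (m.choose i : R) else 0)
        = c (i + j) * ((i + j).choose i : R) := by
      rw [Finset.sum_eq_single (i + j)]
      · rw [if_pos ⟨rfl, by omega⟩]
      · intro m _ hne
        rw [if_neg (by omega), mul_zero]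
      · intro h0
        exact absurd (Finset.mem_range.mpr (by omega)) h0
    have S3 : ∑ m ∈ range (n + 1), c m * (if m = i ∧ j + k = n - m then ((n - m).choose j : R) else 0)
        = c i * ((n - i).choose j : R) := by
      rw [Finset.sum_eq_single i]
      · rw [if_pos ⟨rfl, by omega⟩]
      · intro m _ hne
        rw [if_neg (by omega), mul_zero]
      · intro h0
        exact absurd (Finset.mem_range.mpr (by omega)) h0
    rw [S1, S2, S3, S4] at h
    linear_combination -h
  have EN : c n = 0 := by
    have h := congrArg (coeff (e3 n 0 0)) hcocycle
    simp only [coeff_sub, coeff_add, coeff_sum, coeff_C_mul, coeff_zero,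
      cT1, cT2, cT3, cT4] at h
    have S1 : ∑ m ∈ range (n + 1), c m * (if 0 = n ∧ m = 0 ∧ n - m = 0 then (1:R) else 0) = 0 :=
      Finset.sum_eq_zero fun m _ => by rw [if_neg (by omega), mul_zero]
    have S2 : ∑ m ∈ range (n + 1), c m * (if n + 0 = m ∧ n - m = 0 then (m.choose n : R) else 0)
        = c n := by
      rw [Finset.sum_eq_single n]
      · rw [if_pos ⟨by omega, by omega⟩, Nat.choose_self, Nat.cast_one, mul_one]
      · intro m _ hne
        rw [if_neg (by omega), mul_zero]
      · intro h0
        exact absurd (Finset.mem_range.mpr (by omega)) h0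
    have S3 : ∑ m ∈ range (n + 1), c m * (if m = n ∧ 0 + 0 = n - m then ((n - m).choose 0 : R) else 0)
        = c n := by
      rw [Finset.sum_eq_single n]
      · rw [if_pos ⟨rfl, by omega⟩, Nat.choose_zero_right, Nat.cast_one, mul_one]
      · intro m _ hne
        rw [if_neg (by omega), mul_zero]
      · intro h0
        exact absurd (Finset.mem_range.mpr (by omega)) h0
    have S4 : ∑ m ∈ range (n + 1), c m * (if m = n ∧ n - m = 0 ∧ True then (1:R) else 0)
        = c n := by
      rw [Finset.sum_eq_single n]
      · rw [if_pos ⟨rfl, by omega, trivial⟩, mul_one]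
      · intro m _ hne
        rw [if_neg (by omega), mul_zero]
      · intro h0
        exact absurd (Finset.mem_range.mpr (by omega)) h0
    rw [S1, S2, S3, S4] at h
    linear_combination -h
  have E0 : c 0 = 0 := by
    have := hcsym 0 (by omega)
    simp only [Nat.sub_zero] at this
    rw [← this, EN]
  -- the A-relations
  have hA : ∀ i m, 1 ≤ i → i < m → m ≤ n - 1 →
      (m.choose i : R) * c m = ((n - i).choose (m - i) : R) * c i := by
    intro i m h1 h2 h3
    have h := EA i (m - i) (n - m) h1 (by omega) (by omega) (by omega)
    rw [show i + (m - i) = m from by omega] at h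
    exact h
  have hprop := partB hn c hcsym hA
  -- Bezout combination
  obtain ⟨μ, hμ⟩ := bezout_gam hn
  set a : R := ∑ j ∈ Finset.Ioo 0 n, ((μ j : ℤ) : R) * c j with ha
  have hone : (1 : R) = ∑ j ∈ Finset.Ioo 0 n, ((μ j : ℤ) : R) * ((gam n j : ℕ) : R) := by
    have h0 := congrArg (fun z : ℤ => (z : R)) hμ
    push_cast at h0
    exact h0.symm
  have hcm : ∀ m, 1 ≤ m → m ≤ n - 1 → c m = a * ((gam n m : ℕ) : R) := by
    intro m h1 h2
    calc c m = (∑ j ∈ Finset.Ioo 0 n, ((μ j : ℤ) : R) * ((gam n j : ℕ) : R)) * c m := by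
          rw [← hone, one_mul]
      _ = ∑ j ∈ Finset.Ioo 0 n, ((μ j : ℤ) : R) * (((gam n j : ℕ) : R) * c m) := by
          rw [Finset.sum_mul]
          exact Finset.sum_congr rfl fun j _ => by ring
      _ = ∑ j ∈ Finset.Ioo 0 n, ((μ j : ℤ) : R) * (((gam n m : ℕ) : R) * c j) := by
          refine Finset.sum_congr rfl fun j hj => ?_
          rw [Finset.mem_Ioo] at hj
          rw [hprop j m (by omega) (by omega) h1 h2]
      _ = a * ((gam n m : ℕ) : R) := by
          rw [ha, Finset.sum_mul]
          exact Finset.sum_congr rfl fun j _ => by ring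
  -- the mapped Cpoly
  have hP : map (Int.castRingHom R) (Cpoly n)
      = ∑ k ∈ Finset.Ioo 0 n, monomial (e2 k (n - k)) ((gam n k : ℕ) : R) := by
    rw [Cpoly, map_sum]
    refine Finset.sum_congr rfl fun k hk => ?_
    rw [Finset.mem_Ioo] at hk
    rw [map_monomial]
    congr 1
    have hdvd : (dn n : ℤ) ∣ (n.choose k : ℤ) := by
      exact_mod_cast Dvd.intro _ (gam_mul n k hk.1 hk.2)
    have hdiv : (n.choose k : ℤ) / (dn n : ℤ) = ((gam n k : ℕ) : ℤ) := by
      have hg := gam_mul n k hk.1 hk.2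
      have : (n.choose k : ℤ) = (dn n : ℤ) * ((gam n k : ℕ) : ℤ) := by exact_mod_cast hg.symm
      have hdnpos : 0 < dn n := by
        unfold dn; split
        · exact Nat.minFac_pos n
        · exact one_pos
      rw [this, Int.mul_ediv_cancel_left _ (by exact_mod_cast hdnpos.ne')]
    rw [hdiv]
    simp
  -- coefficient of C b * P
  have hPcoeff : ∀ (b : R) (m : ℕ), 0 < m → m < n →
      coeff (e2 m (n - m)) (C b * map (Int.castRingHom R) (Cpoly n))
        = b * ((gam n m : ℕ) : R) := by
    intro b m h1 h2
    rw [hP, Finset.mul_sum]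
    simp only [C_mul_monomial]
    rw [coeff_sum]
    simp only [coeff_monomial]
    rw [Finset.sum_eq_single m]
    · rw [if_pos rfl]
    · intro k _ hne
      rw [if_neg]
      intro h
      exact hne (e2_inj.mp h).1
    · intro h0
      exact absurd (Finset.mem_Ioo.mpr ⟨h1, h2⟩) h0
  -- existence
  have hfeq : f = C a * map (Int.castRingHom R) (Cpoly n) := by
    rw [hP, hf, Finset.mul_sum]
    simp only [C_mul_monomial]
    have hsub : Finset.Ioo 0 n ⊆ range (n + 1) := by
      intro x hx
      rw [Finset.mem_Ioo] at hx
      exact Finset.mem_range.mpr (by omega)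
    have hzero : ∀ x ∈ range (n + 1), x ∉ Finset.Ioo 0 n →
        (monomial (e2 x (n - x))) (c x) = 0 := by
      intro x hx hnx
      rw [Finset.mem_range] at hx
      rw [Finset.mem_Ioo] at hnx
      have : x = 0 ∨ x = n := by omega
      rcases this with h | h
      · rw [h, show c 0 = 0 from E0, monomial_zero]
      · rw [h, show c n = 0 from EN, monomial_zero]
    rw [← Finset.sum_subset hsub hzero]
    refine Finset.sum_congr rfl fun m hm => ?_
    rw [Finset.mem_Ioo] at hm
    congr 1
    exact hcm m (by omega) (by omega)
  refine ⟨a, hfeq, ?_⟩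
  intro y hy
  have hcoef : ∀ m, 0 < m → m < n → y * ((gam n m : ℕ) : R) = a * ((gam n m : ℕ) : R) := by
    intro m h1 h2
    rw [← hPcoeff y m h1 h2, ← hPcoeff a m h1 h2, ← hy, ← hfeq]
  calc y = y * 1 := (mul_one y).symm
    _ = ∑ j ∈ Finset.Ioo 0 n, ((μ j : ℤ) : R) * (y * ((gam n j : ℕ) : R)) := by
        rw [hone, Finset.mul_sum]
        exact Finset.sum_congr rfl fun j _ => by ring
    _ = ∑ j ∈ Finset.Ioo 0 n, ((μ j : ℤ) : R) * (a * ((gam n j : ℕ) : R)) := by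
        refine Finset.sum_congr rfl fun j hj => ?_
        rw [Finset.mem_Ioo] at hj
        rw [hcoef j hj.1 hj.2]
    _ = a * ∑ j ∈ Finset.Ioo 0 n, ((μ j : ℤ) : R) * ((gam n j : ℕ) : R) := by
        rw [Finset.mul_sum]
        exact Finset.sum_congr rfl fun j _ => by ring
    _ = a := by rw [← hone, mul_one]
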